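/- For α > 2, θ ≥ 0, and b ≥ 0, the substitution v = u^(-1/2)·c (change of variables) yields 2∫₀¹ (1 - 1/(1 + θ v^α)^b) v^(-3) dv = ∫₁^∞ (1 - 1/(1 + θ u^(-α/2))^b) du, and hence 1 + 2∫₀¹ (1 - (1 + θ v^α)^(-b)) v^(-3) dv = ₂F₁(b, -2/α; 1 - 2/α; -θ). -/

import Mathlib

open MeasureTheory Real Set

/-- The Gauss hypergeometric function `₂F₁(b, -2/α; 1-2/α; -θ)`, characterized (as in the paper)
via the integral identity `₂F₁(b,-2/α;1-2/α;-θ) = 1 + ∫₁^∞ (1 - (1+θh^(-α/2))^(-b)) dh`. -/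
noncomputable def hyp2F1 (b α θ : ℝ) : ℝ :=
  1 + ∫ h in Set.Ioi (1:ℝ), (1 - (1 + θ * h ^ (-(α/2))) ^ (-b))

theorem stmt_1 (α θ b : ℝ) (hα : 2 < α) (hθ : 0 ≤ θ) (hb : 0 ≤ b) :
    (2 * ∫ v in Set.Ioc (0:ℝ) 1, (1 - (1 + θ * v ^ α) ^ (-b)) * v ^ (-(3:ℝ)))
        = (∫ u in Set.Ioi (1:ℝ), (1 - (1 + θ * u ^ (-(α/2))) ^ (-b))) ∧
    1 + 2 * ∫ v in Set.Ioc (0:ℝ) 1, (1 - (1 + θ * v ^ α) ^ (-b)) * v ^ (-(3:ℝ))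
        = hyp2F1 b α θ := by
  set g : ℝ → ℝ := fun u => 1 - (1 + θ * u ^ (-(α/2))) ^ (-b) with hg
  have himg : (fun v : ℝ => v ^ (-2:ℝ)) '' Set.Ioc 0 1 = Set.Ici 1 := by
    ext u
    constructor
    · rintro ⟨v, ⟨hv0, hv1⟩, rfl⟩
      exact Real.one_le_rpow_of_pos_of_le_one_of_nonpos hv0 hv1 (by norm_num)
    · intro hu
      have hu0 : (0:ℝ) < u := lt_of_lt_of_le one_pos hu
      refine ⟨u ^ (-(1:ℝ)/2), ⟨Real.rpow_pos_of_pos hu0 _,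
        Real.rpow_le_one_of_one_le_of_nonpos hu (by norm_num)⟩, ?_⟩
      show (u ^ (-(1:ℝ)/2)) ^ (-2:ℝ) = u
      rw [← Real.rpow_mul hu0.le]
      norm_num
  have hinj : Set.InjOn (fun v : ℝ => v ^ (-2:ℝ)) (Set.Ioc 0 1) := by
    intro v1 hv1 v2 hv2 h
    have h2 := congrArg (fun x : ℝ => x ^ (-(1:ℝ)/2)) h
    simp only at h2
    rw [← Real.rpow_mul hv1.1.le, ← Real.rpow_mul hv2.1.le] at h2
    norm_num at h2
    exact h2
  have hderiv : ∀ x ∈ Set.Ioc (0:ℝ) 1, HasDerivWithinAt (fun v : ℝ => v ^ (-2:ℝ))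
      (-2 * x ^ (-3:ℝ)) (Set.Ioc 0 1) x := by
    intro x hx
    have h := (Real.hasDerivAt_rpow_const (x := x) (p := -2) (Or.inl hx.1.ne')).hasDerivWithinAt
      (s := Set.Ioc (0:ℝ) 1)
    rw [show (-3:ℝ) = -2 - 1 by norm_num]
    exact h
  have hkey : (∫ u in Set.Ioi (1:ℝ), g u)
      = 2 * ∫ v in Set.Ioc (0:ℝ) 1, (1 - (1 + θ * v ^ α) ^ (-b)) * v ^ (-(3:ℝ)) := by
    have h1 : (∫ u in Set.Ioi (1:ℝ), g u) = ∫ u in Set.Ici (1:ℝ), g u :=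
      (MeasureTheory.integral_Ici_eq_integral_Ioi).symm
    rw [h1, ← himg,
      MeasureTheory.integral_image_eq_integral_abs_deriv_smul measurableSet_Ioc hderiv hinj g]
    rw [← MeasureTheory.integral_const_mul]
    refine MeasureTheory.setIntegral_congr_fun measurableSet_Ioc ?_
    intro v hv
    have hv0 : (0:ℝ) < v := hv.1
    have h3 : (0:ℝ) < v ^ (-3:ℝ) := Real.rpow_pos_of_pos hv0 _
    have habs : |(-2 : ℝ) * v ^ (-3:ℝ)| = 2 * v ^ (-3:ℝ) := by
      rw [abs_mul]
      rw [abs_of_pos h3]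
      norm_num
    have hpow : ((v ^ (-2:ℝ)) ^ (-(α/2))) = v ^ α := by
      rw [← Real.rpow_mul hv0.le]
      ring_nf
    simp only [smul_eq_mul, habs, hg, hpow]
    ring
  constructor
  · exact hkey.symm
  · rw [hyp2F1, ← hkey]
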